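/- Assume δ, H, ρ > 0, 1 < ρ/(δ+H) ≤ e, 0 < σ < r, and set κ = ln(ρ/(δ+H)). Let λ > 0 satisfy −λ − δ − H e^{−σλ} + ρ e^{−rλ} = 0 and let μ > 0 satisfy μ − δ − H e^{σμ} ≥ 0. Define φ̄ : ℝ → ℝ by φ̄(t) = (μ/(μ+λ)) κ e^{λt} for t ≤ 0 and φ̄(t) = κ(1 − (λ/(μ+λ)) e^{−μt}) for t > 0. Then φ̄ is an upper solution of the Nicholson equation with harvesting: φ̄ is continuous, differentiable at every t ≠ 0, and −φ̄'(t) − δ φ̄(t) − H φ̄(t−σ) + ρ φ̄(t−r) e^{−φ̄(t−r)} ≤ 0 for all t ≠ 0. -/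

import Mathlib

open Real Filter

set_option maxHeartbeats 1000000

/-- On `[0, k]` with `k ≤ 1`, the function `x ↦ x e^{-x}` attains its max at `k`. -/
lemma aux_xexp (x k : ℝ) (hx0 : 0 ≤ x) (hxk : x ≤ k) (hk1 : k ≤ 1) :
    x * Real.exp (-x) ≤ k * Real.exp (-k) := by
  set v := k - x with hv
  have hv0 : 0 ≤ v := by linarith
  have h1 : 1 - v ≤ Real.exp (-v) := by linarith [Real.add_one_le_exp (-v)]
  have h2 : Real.exp v * Real.exp (-v) = 1 := by
    rw [← Real.exp_add]; norm_num
  have h3 : Real.exp v * (1 - v) ≤ 1 := by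
    rcases le_or_gt (1 - v) 0 with h | h
    · nlinarith [Real.exp_pos v]
    · nlinarith [mul_le_mul_of_nonneg_left h1 (Real.exp_pos v).le]
  have h4 : 1 ≤ Real.exp v := Real.one_le_exp hv0
  -- (k - v) * exp v ≤ k
  have h5 : (k - v) * Real.exp v ≤ k := by nlinarith
  -- x * exp(-x) = x * exp v * exp (-k)
  have h6 : Real.exp (-x) = Real.exp v * Real.exp (-k) := by
    rw [← Real.exp_add, hv]; ring_nf
  rw [h6]
  have : x * Real.exp v ≤ k := by rw [hv] at h5; linarith [h5]
  nlinarith [Real.exp_pos (-k)]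

theorem upper_solution_nicholson
    (δ H ρ σ r : ℝ)
    (hδ : 0 < δ) (hH : 0 < H) (hρ : 0 < ρ) (hσ : 0 < σ) (hσr : σ < r)
    (hratio₁ : 1 < ρ / (δ + H)) (hratio₂ : ρ / (δ + H) ≤ Real.exp 1)
    (κ : ℝ) (hκ : κ = Real.log (ρ / (δ + H)))
    (lam : ℝ) (hlam : 0 < lam)
    (hchar : -lam - δ - H * Real.exp (-σ * lam) + ρ * Real.exp (-r * lam) = 0)
    (μ : ℝ) (hμ : 0 < μ) (hμ' : 0 ≤ μ - δ - H * Real.exp (σ * μ))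
    (φb : ℝ → ℝ)
    (hφb : ∀ t : ℝ, φb t =
      if t ≤ 0 then μ / (μ + lam) * κ * Real.exp (lam * t)
      else κ * (1 - lam / (μ + lam) * Real.exp (-μ * t))) :
    Continuous φb ∧
      ∀ t : ℝ, t ≠ 0 → DifferentiableAt ℝ φb t ∧
        -deriv φb t - δ * φb t - H * φb (t - σ) +
          ρ * φb (t - r) * Real.exp (-(φb (t - r))) ≤ 0 := by
  have hml : 0 < μ + lam := by linarith
  have hδH : 0 < δ + H := by linarith
  set a : ℝ := μ / (μ + lam) with ha_def
  set b : ℝ := lam / (μ + lam) with hb_def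
  have ha : 0 < a := div_pos hμ hml
  have hb : 0 < b := div_pos hlam hml
  have hab : a + b = 1 := by rw [ha_def, hb_def]; field_simp
  have habμ : b * μ = a * lam := by rw [ha_def, hb_def]; ring
  have hκpos : 0 < κ := by rw [hκ]; exact Real.log_pos hratio₁
  have hκ1 : κ ≤ 1 := by
    rw [hκ]; exact (Real.log_le_iff_le_exp (by linarith)).mpr hratio₂
  have hek : Real.exp κ = ρ / (δ + H) := by rw [hκ]; exact Real.exp_log (by linarith)
  have hρκ : ρ * Real.exp (-κ) = δ + H := by
    rw [Real.exp_neg, hek]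
    field_simp
  -- bounds for φb
  have hbounds : ∀ s : ℝ, 0 ≤ φb s ∧ φb s ≤ κ := by
    intro s
    rw [hφb s]
    split_ifs with hs
    · have hE1 : Real.exp (lam * s) ≤ 1 :=
        Real.exp_le_one_iff.mpr (by nlinarith)
      have hE0 : 0 < Real.exp (lam * s) := Real.exp_pos _
      have haa : a ≤ 1 := by linarith
      constructor
      · positivity
      · nlinarith [mul_le_mul_of_nonneg_left hE1 (by positivity : (0:ℝ) ≤ a * κ),
          mul_nonneg hb.le hκpos.le]
    · push_neg at hs
      have hE1 : Real.exp (-μ * s) ≤ 1 := Real.exp_le_one_iff.mpr (by nlinarith)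
      have hE0 : 0 < Real.exp (-μ * s) := Real.exp_pos _
      have hb1 : b < 1 := by linarith
      constructor
      · nlinarith [mul_le_mul_of_nonneg_left hE1 hb.le]
      · nlinarith [mul_pos (mul_pos hb hE0) hκpos]
  -- the feedback bound
  have hfeed : ∀ s : ℝ, ρ * φb s * Real.exp (-(φb s)) ≤ (δ + H) * κ := by
    intro s
    obtain ⟨h0, h1⟩ := hbounds s
    have := aux_xexp (φb s) κ h0 h1 hκ1
    have h2 : ρ * (φb s * Real.exp (-(φb s))) ≤ ρ * (κ * Real.exp (-κ)) :=
      mul_le_mul_of_nonneg_left this hρ.le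
    have h3 : ρ * (κ * Real.exp (-κ)) = (δ + H) * κ := by
      rw [← hρκ]; ring
    linarith [h2, h3.le]
  -- continuity
  have hfun : φb = fun t : ℝ => if t ≤ 0 then a * κ * Real.exp (lam * t)
      else κ * (1 - b * Real.exp (-μ * t)) := funext hφb
  have hcont : Continuous φb := by
    rw [hfun]
    have h1 : Continuous fun t : ℝ => a * κ * Real.exp (lam * t) :=
      continuous_const.mul (Real.continuous_exp.comp (continuous_const.mul continuous_id))
    have h2 : Continuous fun t : ℝ => κ * (1 - b * Real.exp (-μ * t)) :=
      continuous_const.mul (continuous_const.sub (continuous_const.mul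
        (Real.continuous_exp.comp (continuous_const.mul continuous_id))))
    exact Continuous.if_le h1 h2 continuous_id continuous_const
      (fun x hx => by
        subst hx
        simp only [mul_zero, Real.exp_zero, neg_zero, zero_mul, mul_one]
        linear_combination κ * hab)
  refine ⟨hcont, ?_⟩
  intro t ht
  -- convexity fact
  have hconv : ∀ s : ℝ, 1 ≤ b * Real.exp (μ * s) + a * Real.exp (-lam * s) := by
    intro s
    have h1 := mul_le_mul_of_nonneg_left (Real.add_one_le_exp (μ * s)) hb.le
    have h2 := mul_le_mul_of_nonneg_left (Real.add_one_le_exp (-lam * s)) ha.le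
    have h0 : b * μ * s = a * lam * s := by rw [habμ]
    nlinarith [h1, h2, h0, hab]
  rcases lt_or_gt_of_ne ht with htneg | htpos
  · -- t < 0 : all arguments negative
    have hev : φb =ᶠ[nhds t] fun s => a * κ * Real.exp (lam * s) := by
      filter_upwards [Iio_mem_nhds htneg] with s hs
      rw [hφb s, if_pos (le_of_lt hs)]
    have hft : HasDerivAt (fun s => a * κ * Real.exp (lam * s))
        (a * κ * (Real.exp (lam * t) * (lam * 1))) t :=
      (((hasDerivAt_id t).const_mul lam).exp).const_mul (a * κ)
    have hφt : HasDerivAt φb (a * κ * (Real.exp (lam * t) * (lam * 1))) t :=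
      hft.congr_of_eventuallyEq hev
    refine ⟨hφt.differentiableAt, ?_⟩
    rw [hφt.deriv]
    have hv0 : φb t = a * κ * Real.exp (lam * t) := by
      rw [hφb t, if_pos htneg.le]
    have hv1 : φb (t - σ) = a * κ * Real.exp (lam * (t - σ)) := by
      rw [hφb (t - σ), if_pos (by linarith)]
    have hv2 : φb (t - r) = a * κ * Real.exp (lam * (t - r)) := by
      rw [hφb (t - r), if_pos (by linarith)]
    rw [hv0, hv1, hv2]
    have e1 : Real.exp (lam * (t - σ)) = Real.exp (lam * t) * Real.exp (-σ * lam) := by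
      rw [← Real.exp_add]; ring_nf
    have e2 : Real.exp (lam * (t - r)) = Real.exp (lam * t) * Real.exp (-r * lam) := by
      rw [← Real.exp_add]; ring_nf
    rw [e1, e2]
    set X := Real.exp (lam * t) with hX_def
    set S := Real.exp (-σ * lam) with hS_def
    set R := Real.exp (-r * lam) with hR_def
    have hX : 0 < X := Real.exp_pos _
    have hS : 0 < S := Real.exp_pos _
    have hR : 0 < R := Real.exp_pos _
    set P := a * κ * (X * R) with hP_def
    have hP : 0 ≤ P := by positivity
    have hE1 : Real.exp (-P) ≤ 1 := Real.exp_le_one_iff.mpr (by linarith)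
    have hE0 : 0 < Real.exp (-P) := Real.exp_pos _
    have key : ρ * P * Real.exp (-P) ≤ ρ * P := by
      nlinarith [mul_le_mul_of_nonneg_left hE1 (mul_nonneg hρ.le hP)]
    have hcomb : (-lam - δ - H * S + ρ * R) * (a * κ * X) = 0 := by
      rw [hchar]; ring
    nlinarith [key, hcomb]
  · -- t > 0
    have hev : φb =ᶠ[nhds t] fun s => κ * (1 - b * Real.exp (-μ * s)) := by
      filter_upwards [Ioi_mem_nhds htpos] with s hs
      rw [hφb s, if_neg (not_le.mpr hs)]
    have hgt : HasDerivAt (fun s => κ * (1 - b * Real.exp (-μ * s)))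
        (κ * -(b * (Real.exp (-μ * t) * (-μ * 1)))) t :=
      (((((hasDerivAt_id t).const_mul (-μ)).exp).const_mul b).const_sub 1).const_mul κ
    have hφt : HasDerivAt φb (κ * -(b * (Real.exp (-μ * t) * (-μ * 1)))) t :=
      hgt.congr_of_eventuallyEq hev
    refine ⟨hφt.differentiableAt, ?_⟩
    rw [hφt.deriv]
    have hv0 : φb t = κ * (1 - b * Real.exp (-μ * t)) := by
      rw [hφb t, if_neg (not_le.mpr htpos)]
    rw [hv0]
    have hF := hfeed (t - r)
    set F := ρ * φb (t - r) * Real.exp (-(φb (t - r))) with hF_def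
    set T := Real.exp (-μ * t) with hT_def
    have hT : 0 < T := Real.exp_pos _
    have hSμ : 0 < Real.exp (σ * μ) := Real.exp_pos _
    rcases le_or_gt (t - σ) 0 with hts | hts
    · -- 0 < t ≤ σ
      have hv1 : φb (t - σ) = a * κ * Real.exp (lam * (t - σ)) := by
        rw [hφb (t - σ), if_pos hts]
      rw [hv1]
      set L := Real.exp (lam * (t - σ)) with hL_def
      have hL : 0 < L := Real.exp_pos _
      -- convexity at s = σ - t
      have hc := hconv (σ - t)
      have ec1 : Real.exp (μ * (σ - t)) = Real.exp (σ * μ) * T := by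
        rw [hT_def, ← Real.exp_add]; ring_nf
      have ec2 : Real.exp (-lam * (σ - t)) = L := by
        rw [hL_def]; ring_nf
      rw [ec1, ec2] at hc
      -- multiply hμ' by κ * b * T and hc by H * κ
      have k1 : (δ + H * Real.exp (σ * μ)) * (κ * b * T) ≤ μ * (κ * b * T) := by
        have : δ + H * Real.exp (σ * μ) ≤ μ := by linarith
        exact mul_le_mul_of_nonneg_right this (by positivity)
      have k2 : H * κ * 1 ≤ H * κ * (b * (Real.exp (σ * μ) * T) + a * L) :=
        mul_le_mul_of_nonneg_left hc (by positivity)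
      nlinarith [k1, k2, hF]
    · -- t > σ
      have hv1 : φb (t - σ) = κ * (1 - b * Real.exp (-μ * (t - σ))) := by
        rw [hφb (t - σ), if_neg (not_le.mpr hts)]
      rw [hv1]
      have ec : Real.exp (-μ * (t - σ)) = Real.exp (σ * μ) * T := by
        rw [hT_def, ← Real.exp_add]; ring_nf
      rw [ec]
      have k1 : (δ + H * Real.exp (σ * μ)) * (κ * b * T) ≤ μ * (κ * b * T) := by
        have : δ + H * Real.exp (σ * μ) ≤ μ := by linarith
        exact mul_le_mul_of_nonneg_right this (by positivity)
      nlinarith [k1, hF]
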